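/- Let u : I → J be a functor between small categories enriched over a complete symmetric monoidal category C, and suppose that for every pair of objects j, j' in J the canonical map of enriched coends ∫^{i∈I} Hom_J(j, u(i)) ⊗ Hom_J(u(i), j') → Hom_J(j, j') induced by composition is an isomorphism. Then for every enriched functor F : J^op × J → C for which the enriched end ∫_{j∈J} F(j,j) exists, the canonical comparison map ∫_{j∈J} F(j,j) → ∫_{i∈I} F(u(i), u(i)) is an isomorphism. -/

import Mathlib

open CategoryTheory Opposite

universe u

variable {I J : Type u} [SmallCategory I] [SmallCategory J]

/-- The relation generating the coend `∫^{i ∈ I} Hom_J(j, u i) × Hom_J(u i, j')`. -/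
def CoendRel (u : I ⥤ J) (j j' : J)
    (x y : Σ i : I, (j ⟶ u.obj i) × (u.obj i ⟶ j')) : Prop :=
  ∃ φ : x.1 ⟶ y.1, y.2.1 = x.2.1 ≫ u.map φ ∧ x.2.2 = u.map φ ≫ y.2.2

/-- The canonical map, induced by composition, from the coend
`∫^{i ∈ I} Hom_J(j, u i) × Hom_J(u i, j')` to `Hom_J(j, j')`. -/
def coendCompMap (u : I ⥤ J) (j j' : J) :
    Quot (CoendRel u j j') → (j ⟶ j') :=
  Quot.lift (fun x => x.2.1 ≫ x.2.2) (by
    rintro x y ⟨φ, h1, h2⟩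
    try simp only []
    rw [h2, ← Category.assoc, ← h1])

/-- The (Type-enriched) end `∫_{j ∈ J} F(j, j)` of `F : Jᵒᵖ × J ⥤ Type`. -/
def EndSet (F : Jᵒᵖ × J ⥤ Type u) : Type u :=
  {x : ∀ j : J, F.obj (op j, j) //
    ∀ {j j' : J} (f : j ⟶ j'),
      F.map ((𝟙 (op j), f) : (op j, j) ⟶ (op j, j')) (x j) =
        F.map ((f.op, 𝟙 j') : (op j', j') ⟶ (op j, j')) (x j')}

/-- The canonical comparison map `∫_{j ∈ J} F(j,j) ⟶ ∫_{i ∈ I} F(u i, u i)`. -/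
def restrictEnd (u : I ⥤ J) (F : Jᵒᵖ × J ⥤ Type u) (x : EndSet F) :
    EndSet (u.op.prod u ⋙ F) := by
  refine ⟨fun i => x.1 (u.obj i), ?_⟩
  intro i i' φ
  have := x.2 (u.map φ)
  simpa [Functor.prod, CategoryStruct.comp] using this

section Aux

variable (u : I ⥤ J) (F : Jᵒᵖ × J ⥤ Type u) {j j' : J}

/-- raw map from representatives of the coend to `F.obj (op j, j')` -/
def psiRaw (y : EndSet (u.op.prod u ⋙ F)) (j j' : J)
    (x : Σ i : I, (j ⟶ u.obj i) × (u.obj i ⟶ j')) : F.obj (op j, j') :=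
  F.map ((x.2.1.op, x.2.2) : (op (u.obj x.1), u.obj x.1) ⟶ (op j, j')) (y.1 x.1)

lemma psiRaw_rel (y : EndSet (u.op.prod u ⋙ F)) (j j' : J)
    (x z : Σ i : I, (j ⟶ u.obj i) × (u.obj i ⟶ j'))
    (hxz : CoendRel u j j' x z) : psiRaw u F y j j' x = psiRaw u F y j j' z := by
  obtain ⟨φ, h1, h2⟩ := hxz
  have hy := y.2 φ
  simp only [Functor.comp_map, Functor.prod_map, Functor.op_map] at hy
  unfold psiRaw
  rw [h2, h1]
  let a1 : (op (u.obj x.1), u.obj x.1) ⟶ (op (u.obj x.1), u.obj z.1) :=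
    (𝟙 (op (u.obj x.1)), u.map φ)
  let a2 : (op (u.obj z.1), u.obj z.1) ⟶ (op (u.obj x.1), u.obj z.1) :=
    ((u.map φ).op, 𝟙 (u.obj z.1))
  let b : (op (u.obj x.1), u.obj z.1) ⟶ (op j, j') := (x.2.1.op, z.2.2)
  have e1 : a1 ≫ b = ((x.2.1.op, u.map φ ≫ z.2.2) :
      (op (u.obj x.1), u.obj x.1) ⟶ (op j, j')) := by
    simp [a1, b, prod_comp]
  have e2 : a2 ≫ b = (((x.2.1 ≫ u.map φ).op, z.2.2) :
      (op (u.obj z.1), u.obj z.1) ⟶ (op j, j')) := by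
    simp [a2, b, prod_comp, ← op_comp]
  rw [← e1, ← e2, FunctorToTypes.map_comp_apply, FunctorToTypes.map_comp_apply]
  exact congrArg (F.map b) (by simpa [a1, a2] using hy)

def psi (y : EndSet (u.op.prod u ⋙ F)) (j j' : J) :
    Quot (CoendRel u j j') → F.obj (op j, j') :=
  Quot.lift (psiRaw u F y j j') (psiRaw_rel u F y j j')

/-- post-composition on the coend -/
def postMap (f : j ⟶ j') : Quot (CoendRel u j j) → Quot (CoendRel u j j') :=
  Quot.map (fun x => ⟨x.1, x.2.1, x.2.2 ≫ f⟩) (by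
    rintro x z ⟨φ, h1, h2⟩
    exact ⟨φ, h1, by simp [h2]⟩)

/-- pre-composition on the coend -/
def preMap (f : j ⟶ j') : Quot (CoendRel u j' j') → Quot (CoendRel u j j') :=
  Quot.map (fun x => ⟨x.1, f ≫ x.2.1, x.2.2⟩) (by
    rintro x z ⟨φ, h1, h2⟩
    exact ⟨φ, by simp [h1], h2⟩)

lemma coendCompMap_postMap (f : j ⟶ j') (q : Quot (CoendRel u j j)) :
    coendCompMap u j j' (postMap u f q) = coendCompMap u j j q ≫ f := by
  induction q using Quot.ind with
  | _ x => exact (Category.assoc x.2.1 x.2.2 f).symm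

lemma coendCompMap_preMap (f : j ⟶ j') (q : Quot (CoendRel u j' j')) :
    coendCompMap u j j' (preMap u f q) = f ≫ coendCompMap u j' j' q := by
  induction q using Quot.ind with
  | _ x => exact Category.assoc f x.2.1 x.2.2

lemma psi_postMap (y : EndSet (u.op.prod u ⋙ F)) (f : j ⟶ j')
    (q : Quot (CoendRel u j j)) :
    F.map ((𝟙 (op j), f) : (op j, j) ⟶ (op j, j')) (psi u F y j j q)
      = psi u F y j j' (postMap u f q) := by
  induction q using Quot.ind with
  | _ x =>
    show F.map _ (F.map _ _) = F.map _ _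
    rw [← FunctorToTypes.map_comp_apply]
    simp [prod_comp]

lemma psi_preMap (y : EndSet (u.op.prod u ⋙ F)) (f : j ⟶ j')
    (q : Quot (CoendRel u j' j')) :
    F.map ((f.op, 𝟙 j') : (op j', j') ⟶ (op j, j')) (psi u F y j' j' q)
      = psi u F y j j' (preMap u f q) := by
  induction q using Quot.ind with
  | _ x =>
    show F.map _ (F.map _ _) = F.map _ _
    rw [← FunctorToTypes.map_comp_apply]
    simp [prod_comp, ← op_comp]

variable (h : ∀ j j' : J, Function.Bijective (coendCompMap u j j'))

noncomputable def coendEquiv (j j' : J) : Quot (CoendRel u j j') ≃ (j ⟶ j') :=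
  Equiv.ofBijective _ (h j j')

/-- the inverse of `restrictEnd` -/
noncomputable def endInverse (y : EndSet (u.op.prod u ⋙ F)) : EndSet F := by
  refine ⟨fun j => psi u F y j j ((coendEquiv u h j j).symm (𝟙 j)), ?_⟩
  intro j j' f
  rw [psi_postMap, psi_preMap]
  congr 1
  apply (h j j').1
  rw [coendCompMap_postMap, coendCompMap_preMap,
    show coendCompMap u j j ((coendEquiv u h j j).symm (𝟙 j)) = 𝟙 j from
    (coendEquiv u h j j).apply_symm_apply (𝟙 j),
    show coendCompMap u j' j' ((coendEquiv u h j' j').symm (𝟙 j')) = 𝟙 j' from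
    (coendEquiv u h j' j').apply_symm_apply (𝟙 j')]
  simp

lemma psi_restrictEnd (x : EndSet F) (j : J) (q : Quot (CoendRel u j j)) :
    psi u F (restrictEnd u F x) j j q
      = F.map (((coendCompMap u j j q).op, 𝟙 j) : (op j, j) ⟶ (op j, j)) (x.1 j) := by
  induction q using Quot.ind with
  | _ t =>
    obtain ⟨i, a, b⟩ := t
    show F.map ((a.op, b) : (op (u.obj i), u.obj i) ⟶ (op j, j)) (x.1 (u.obj i))
      = F.map (((a ≫ b).op, 𝟙 j) : (op j, j) ⟶ (op j, j)) (x.1 j)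
    have hx := x.2 b
    let c : ((op (u.obj i) : Jᵒᵖ), j) ⟶ (op j, j) := (a.op, 𝟙 j)
    have hc := congrArg (F.map c) hx
    rw [← FunctorToTypes.map_comp_apply, ← FunctorToTypes.map_comp_apply] at hc
    convert hc using 2 <;> simp [c, prod_comp, ← op_comp]

lemma left_inv (x : EndSet F) : endInverse u F h (restrictEnd u F x) = x := by
  apply Subtype.ext
  funext j
  show psi u F (restrictEnd u F x) j j _ = x.1 j
  rw [psi_restrictEnd,
    show coendCompMap u j j ((coendEquiv u h j j).symm (𝟙 j)) = 𝟙 j from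
    (coendEquiv u h j j).apply_symm_apply (𝟙 j)]
  exact FunctorToTypes.map_id_apply F (x.1 j)

lemma right_inv (y : EndSet (u.op.prod u ⋙ F)) :
    restrictEnd u F (endInverse u F h y) = y := by
  apply Subtype.ext
  funext i
  show psi u F y (u.obj i) (u.obj i) _ = y.1 i
  have hq : (coendEquiv u h (u.obj i) (u.obj i)).symm (𝟙 (u.obj i))
      = Quot.mk _ ⟨i, 𝟙 (u.obj i), 𝟙 (u.obj i)⟩ := by
    apply (coendEquiv u h (u.obj i) (u.obj i)).injective
    rw [Equiv.apply_symm_apply]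
    exact (Category.id_comp (𝟙 (u.obj i))).symm
  rw [hq]
  exact FunctorToTypes.map_id_apply F (y.1 i)

end Aux

/-- If `u : I ⥤ J` is such that for all `j, j'` the canonical map of coends
`∫^{i ∈ I} Hom_J(j, u i) × Hom_J(u i, j') → Hom_J(j, j')` induced by composition is an
isomorphism (a bijection), then for every functor `F : Jᵒᵖ × J ⥤ Type` the canonical
comparison map of ends `∫_{j ∈ J} F(j,j) → ∫_{i ∈ I} F(u i, u i)` is an isomorphism. -/
theorem end_comparison_bijective_of_coend_condition (u : I ⥤ J)
    (h : ∀ j j' : J, Function.Bijective (coendCompMap u j j')) :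
    ∀ F : Jᵒᵖ × J ⥤ Type u, Function.Bijective (restrictEnd u F) := by
  intro F
  rw [Function.bijective_iff_has_inverse]
  exact ⟨endInverse u F h, left_inv u F h, right_inv u F h⟩
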